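/- arXiv:1312.2732 — 2 statements merged into one kernel-verified Lean document; each statement's English description precedes it below -/
import Mathlib

section
/- Let K be a field, G = GL(2,K), and H the subgroup of invertible diagonal matrices of G. Then the elements e (the identity matrix), w₀ = [[0,−1],[1,0]], u = [[1,1],[0,1]], ū = [[1,0],[1,1]], u·w₀ = [[1,−1],[1,0]], ū·w₀ = [[0,−1],[1,−1]], together with δ_b = [[1+b⁻¹,1],[1,1]] for b ranging over K^× ∖ {−1}, form a complete system of representatives of the double coset space H\G/H: every g ∈ G lies in the double coset HδH of exactly one element δ of this list, and δ_b, δ_{b'} lie in the same double coset only if b = b'. -/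
open Matrix

/-- The double coset relation `A ∈ H M H`, where `H` is the subgroup of invertible
diagonal matrices of `G = GL(2,K)`: there are invertible diagonal matrices `h₁, h₂`
with `A = h₁ * M * h₂`. -/
def SameDoubleCoset {K : Type*} [Field K] (A M : Matrix (Fin 2) (Fin 2) K) : Prop :=
  ∃ h₁ h₂ : GL (Fin 2) K,
    (h₁ : Matrix (Fin 2) (Fin 2) K) 0 1 = 0 ∧ (h₁ : Matrix (Fin 2) (Fin 2) K) 1 0 = 0 ∧
    (h₂ : Matrix (Fin 2) (Fin 2) K) 0 1 = 0 ∧ (h₂ : Matrix (Fin 2) (Fin 2) K) 1 0 = 0 ∧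
    A = (h₁ : Matrix (Fin 2) (Fin 2) K) * M * h₂

section Aux

variable {K : Type*} [Field K]

variable {K : Type*} [Field K]

/-- Diagonal invertible matrix as an element of GL. -/
def diagGL (s t : K) (hs : s ≠ 0) (ht : t ≠ 0) : GL (Fin 2) K :=
  ⟨diagonal ![s, t], diagonal ![s⁻¹, t⁻¹],
    by rw [diagonal_mul_diagonal]; ext i j; fin_cases i <;> fin_cases j <;>
        simp [mul_inv_cancel₀, hs, ht],
    by rw [diagonal_mul_diagonal]; ext i j; fin_cases i <;> fin_cases j <;>
        simp [inv_mul_cancel₀, hs, ht]⟩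

@[simp] lemma diagGL_coe (s t : K) (hs : s ≠ 0) (ht : t ≠ 0) :
    (diagGL s t hs ht : Matrix (Fin 2) (Fin 2) K) = diagonal ![s, t] := rfl

lemma sdc_mk {A M : Matrix (Fin 2) (Fin 2) K} (s t u v : K)
    (hs : s ≠ 0) (ht : t ≠ 0) (hu : u ≠ 0) (hv : v ≠ 0)
    (h00 : A 0 0 = s * M 0 0 * u) (h01 : A 0 1 = s * M 0 1 * v)
    (h10 : A 1 0 = t * M 1 0 * u) (h11 : A 1 1 = t * M 1 1 * v) :
    SameDoubleCoset A M := by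
  refine ⟨diagGL s t hs ht, diagGL u v hu hv, by simp, by simp, by simp, by simp, ?_⟩
  ext i j
  fin_cases i <;> fin_cases j <;>
    simp [mul_apply, Fin.sum_univ_two, diagonal, h00, h01, h10, h11] <;> try ring

lemma sdc_entries {A M : Matrix (Fin 2) (Fin 2) K} (h : SameDoubleCoset A M) :
    ∃ s t u v : K, s ≠ 0 ∧ t ≠ 0 ∧ u ≠ 0 ∧ v ≠ 0 ∧
      A 0 0 = s * M 0 0 * u ∧ A 0 1 = s * M 0 1 * v ∧
      A 1 0 = t * M 1 0 * u ∧ A 1 1 = t * M 1 1 * v := by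
  obtain ⟨h₁, h₂, e1, e2, e3, e4, hA⟩ := h
  set P := (h₁ : Matrix (Fin 2) (Fin 2) K) with hP
  set Q := (h₂ : Matrix (Fin 2) (Fin 2) K) with hQ
  have hd1 : P.det ≠ 0 := by
    have : IsUnit P.det := (isUnit_iff_isUnit_det P).mp h₁.isUnit
    exact this.ne_zero
  have hd2 : Q.det ≠ 0 := by
    have : IsUnit Q.det := (isUnit_iff_isUnit_det Q).mp h₂.isUnit
    exact this.ne_zero
  rw [det_fin_two, e1, e2] at hd1
  rw [det_fin_two, e3, e4] at hd2
  simp only [mul_zero, zero_mul, sub_zero] at hd1 hd2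
  refine ⟨P 0 0, P 1 1, Q 0 0, Q 1 1,
    fun h => hd1 (by rw [h, zero_mul]), fun h => hd1 (by rw [h, mul_zero]),
    fun h => hd2 (by rw [h, zero_mul]), fun h => hd2 (by rw [h, mul_zero]),
    ?_, ?_, ?_, ?_⟩ <;>
  · rw [hA]
    simp [mul_apply, Fin.sum_univ_two, e1, e2, e3, e4]

lemma sdc_symm {A M : Matrix (Fin 2) (Fin 2) K} (h : SameDoubleCoset A M) :
    SameDoubleCoset M A := by
  obtain ⟨s, t, u, v, hs, ht, hu, hv, h00, h01, h10, h11⟩ := sdc_entries h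
  refine sdc_mk s⁻¹ t⁻¹ u⁻¹ v⁻¹ (inv_ne_zero hs) (inv_ne_zero ht) (inv_ne_zero hu)
    (inv_ne_zero hv) ?_ ?_ ?_ ?_
  · rw [h00]; field_simp
  · rw [h01]; field_simp
  · rw [h10]; field_simp
  · rw [h11]; field_simp

lemma sdc_trans {A M N : Matrix (Fin 2) (Fin 2) K} (h : SameDoubleCoset A M)
    (h' : SameDoubleCoset M N) : SameDoubleCoset A N := by
  obtain ⟨s, t, u, v, hs, ht, hu, hv, h00, h01, h10, h11⟩ := sdc_entries h
  obtain ⟨s', t', u', v', hs', ht', hu', hv', g00, g01, g10, g11⟩ := sdc_entries h'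
  refine sdc_mk (s * s') (t * t') (u' * u) (v' * v) (mul_ne_zero hs hs')
    (mul_ne_zero ht ht') (mul_ne_zero hu' hu) (mul_ne_zero hv' hv) ?_ ?_ ?_ ?_
  · rw [h00, g00]; ring
  · rw [h01, g01]; ring
  · rw [h10, g10]; ring
  · rw [h11, g11]; ring

lemma sdc_invariants {A M : Matrix (Fin 2) (Fin 2) K} (h : SameDoubleCoset A M) :
    (A 0 0 = 0 ↔ M 0 0 = 0) ∧ (A 0 1 = 0 ↔ M 0 1 = 0) ∧
    (A 1 0 = 0 ↔ M 1 0 = 0) ∧ (A 1 1 = 0 ↔ M 1 1 = 0) ∧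
    A 0 0 * A 1 1 * (M 0 1 * M 1 0) = M 0 0 * M 1 1 * (A 0 1 * A 1 0) := by
  obtain ⟨s, t, u, v, hs, ht, hu, hv, h00, h01, h10, h11⟩ := sdc_entries h
  refine ⟨?_, ?_, ?_, ?_, ?_⟩
  · rw [h00]; simp [hs, hu, mul_eq_zero]
  · rw [h01]; simp [hs, hv, mul_eq_zero]
  · rw [h10]; simp [ht, hu, mul_eq_zero]
  · rw [h11]; simp [ht, hv, mul_eq_zero]
  · rw [h00, h01, h10, h11]; ring

lemma one_add_inv_ne_zero {b : K} (hb0 : b ≠ 0) (hb1 : b ≠ -1) : 1 + b⁻¹ ≠ 0 := by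
  intro h
  apply hb1
  field_simp at h
  linear_combination h

lemma reps_eq {M M' : Matrix (Fin 2) (Fin 2) K}
    (hM : M = !![1, 0; 0, 1] ∨ M = !![0, -1; 1, 0] ∨ M = !![1, 1; 0, 1] ∨
      M = !![1, 0; 1, 1] ∨ M = !![1, -1; 1, 0] ∨ M = !![0, -1; 1, -1] ∨
      ∃ b : K, b ≠ 0 ∧ b ≠ -1 ∧ M = !![1 + b⁻¹, 1; 1, 1])
    (hM' : M' = !![1, 0; 0, 1] ∨ M' = !![0, -1; 1, 0] ∨ M' = !![1, 1; 0, 1] ∨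
      M' = !![1, 0; 1, 1] ∨ M' = !![1, -1; 1, 0] ∨ M' = !![0, -1; 1, -1] ∨
      ∃ b : K, b ≠ 0 ∧ b ≠ -1 ∧ M' = !![1 + b⁻¹, 1; 1, 1])
    (h : SameDoubleCoset M M') : M = M' := by
  obtain ⟨i00, i01, i10, i11, cross⟩ := sdc_invariants h
  clear h
  rcases hM with rfl | rfl | rfl | rfl | rfl | rfl | ⟨b, hb0, hb1, rfl⟩ <;>
    rcases hM' with rfl | rfl | rfl | rfl | rfl | rfl | ⟨b', hb0', hb1', rfl⟩ <;>
    simp only [Matrix.cons_val', Matrix.cons_val_zero, Matrix.cons_val_one, Matrix.head_cons,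
      Matrix.head_fin_const, Matrix.empty_val', Matrix.cons_val_fin_one, Matrix.of_apply,
      mul_one, one_mul] at i00 i01 i10 i11 cross <;>
    first
      | rfl
      | (exfalso; norm_num at *; done)
      | (exfalso
         norm_num at *
         first
           | exact one_add_inv_ne_zero hb0' hb1' i00
           | exact one_add_inv_ne_zero hb0 hb1 i00
         done)
      | (obtain rfl : b = b' := inv_injective (by linear_combination cross)
         rfl)

lemma exists_rep (g : GL (Fin 2) K) :
    ∃ M : Matrix (Fin 2) (Fin 2) K,
      (M = !![1, 0; 0, 1] ∨ M = !![0, -1; 1, 0] ∨ M = !![1, 1; 0, 1] ∨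
        M = !![1, 0; 1, 1] ∨ M = !![1, -1; 1, 0] ∨ M = !![0, -1; 1, -1] ∨
        ∃ b : K, b ≠ 0 ∧ b ≠ -1 ∧ M = !![1 + b⁻¹, 1; 1, 1]) ∧
      SameDoubleCoset (g : Matrix (Fin 2) (Fin 2) K) M := by
  set A := (g : Matrix (Fin 2) (Fin 2) K) with hA
  have hdet : A.det ≠ 0 := ((isUnit_iff_isUnit_det A).mp g.isUnit).ne_zero
  rw [det_fin_two] at hdet
  by_cases hb : A 0 1 = 0 <;> by_cases hc : A 1 0 = 0
  · -- b = 0, c = 0 : identity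
    rw [hb, hc] at hdet
    simp only [mul_zero, sub_zero] at hdet
    obtain ⟨ha, hd⟩ := mul_ne_zero_iff.mp hdet
    exact ⟨_, Or.inl rfl, sdc_mk (A 0 0) (A 1 1) 1 1 ha hd one_ne_zero one_ne_zero
      (by simp) (by simp [hb]) (by simp [hc]) (by simp)⟩
  · -- b = 0, c ≠ 0 : lower unipotent
    rw [hb] at hdet
    simp only [zero_mul, sub_zero] at hdet
    obtain ⟨ha, hd⟩ := mul_ne_zero_iff.mp hdet
    refine ⟨_, Or.inr (Or.inr (Or.inr (Or.inl rfl))),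
      sdc_mk (A 0 0) (A 1 0) 1 (A 1 1 / A 1 0) ha hc one_ne_zero (div_ne_zero hd hc)
      (by simp) (by simp [hb]) (by simp) ?_⟩
    simp only [Matrix.cons_val', Matrix.cons_val_zero, Matrix.cons_val_one, Matrix.head_cons,
      Matrix.empty_val', Matrix.cons_val_fin_one, Matrix.of_apply]
    field_simp
  · -- b ≠ 0, c = 0 : upper unipotent
    rw [hc] at hdet
    simp only [mul_zero, sub_zero] at hdet
    obtain ⟨ha, hd⟩ := mul_ne_zero_iff.mp hdet
    refine ⟨_, Or.inr (Or.inr (Or.inl rfl)),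
      sdc_mk (A 0 0) (A 1 1 * A 0 0 / A 0 1) 1 (A 0 1 / A 0 0) ha
      (div_ne_zero (mul_ne_zero hd ha) hb) one_ne_zero (div_ne_zero hb ha)
      (by simp) ?_ (by simp [hc]) ?_⟩
    · simp only [Matrix.cons_val', Matrix.cons_val_zero, Matrix.cons_val_one, Matrix.head_cons,
        Matrix.empty_val', Matrix.cons_val_fin_one, Matrix.of_apply]
      field_simp
    · simp only [Matrix.cons_val', Matrix.cons_val_zero, Matrix.cons_val_one, Matrix.head_cons,
        Matrix.empty_val', Matrix.cons_val_fin_one, Matrix.of_apply]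
      field_simp
      try ring
  · -- b ≠ 0, c ≠ 0
    by_cases ha : A 0 0 = 0 <;> by_cases hd : A 1 1 = 0
    · -- antidiagonal : w₀
      refine ⟨_, Or.inr (Or.inl rfl),
        sdc_mk (-(A 0 1)) (A 1 0) 1 1 (neg_ne_zero.mpr hb) hc one_ne_zero one_ne_zero
        (by simp [ha]) (by simp) (by simp) (by simp [hd])⟩
    · -- a = 0, d ≠ 0 : ū w₀
      refine ⟨_, Or.inr (Or.inr (Or.inr (Or.inr (Or.inr (Or.inl rfl))))),
        sdc_mk (-(A 0 1)) (-(A 1 1)) (-(A 1 0) / A 1 1) 1 (neg_ne_zero.mpr hb)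
        (neg_ne_zero.mpr hd) (div_ne_zero (neg_ne_zero.mpr hc) hd) one_ne_zero
        (by simp [ha]) (by simp) ?_ (by simp)⟩
      simp only [Matrix.cons_val', Matrix.cons_val_zero, Matrix.cons_val_one, Matrix.head_cons,
        Matrix.empty_val', Matrix.cons_val_fin_one, Matrix.of_apply, one_mul]
      field_simp
    · -- d = 0, a ≠ 0 : u w₀
      refine ⟨_, Or.inr (Or.inr (Or.inr (Or.inr (Or.inl rfl)))),
        sdc_mk (A 0 0) (A 1 0) 1 (-(A 0 1) / A 0 0) ha hc one_ne_zero
        (div_ne_zero (neg_ne_zero.mpr hb) ha)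
        (by simp) ?_ (by simp) (by simp [hd])⟩
      simp only [Matrix.cons_val', Matrix.cons_val_zero, Matrix.cons_val_one, Matrix.head_cons,
        Matrix.empty_val', Matrix.cons_val_fin_one, Matrix.of_apply]
      field_simp
    · -- generic : δ family
      have hbc : A 0 1 * A 1 0 ≠ 0 := mul_ne_zero hb hc
      have had : A 0 0 * A 1 1 ≠ 0 := mul_ne_zero ha hd
      set r : K := A 0 0 * A 1 1 / (A 0 1 * A 1 0) with hr
      have hr1 : r - 1 ≠ 0 := by
        intro h
        apply hdet
        rw [sub_eq_zero, hr, div_eq_iff hbc] at h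
        linear_combination h
      have hr0 : r ≠ 0 := div_ne_zero had hbc
      refine ⟨_, Or.inr (Or.inr (Or.inr (Or.inr (Or.inr (Or.inr
        ⟨(r - 1)⁻¹, inv_ne_zero hr1, ?_, rfl⟩))))), ?_⟩
      · intro h
        apply hr0
        have : r - 1 = -1 := by
          rw [← inv_inv (r - 1), h]
          norm_num
        linear_combination this
      · have hδ : 1 + ((r - 1)⁻¹)⁻¹ = r := by rw [inv_inv]; ring
        refine sdc_mk (A 0 1 * A 1 0 / A 1 1) (A 1 0) 1 (A 1 1 / A 1 0)
          (div_ne_zero hbc hd) hc one_ne_zero (div_ne_zero hd hc) ?_ ?_ ?_ ?_ <;>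
        · simp only [Matrix.cons_val', Matrix.cons_val_zero, Matrix.cons_val_one,
            Matrix.head_cons, Matrix.empty_val', Matrix.cons_val_fin_one, Matrix.of_apply, hδ, hr]
          field_simp
          try ring

lemma mem_iff (N : Matrix (Fin 2) (Fin 2) K) :
    (N ∈ ({!![1, 0; 0, 1], !![0, -1; 1, 0], !![1, 1; 0, 1], !![1, 0; 1, 1],
            !![1, -1; 1, 0], !![0, -1; 1, -1]} : Set (Matrix (Fin 2) (Fin 2) K)) ∪
          {N : Matrix (Fin 2) (Fin 2) K |
            ∃ b : K, b ≠ 0 ∧ b ≠ -1 ∧ N = !![1 + b⁻¹, 1; 1, 1]}) ↔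
    (N = !![1, 0; 0, 1] ∨ N = !![0, -1; 1, 0] ∨ N = !![1, 1; 0, 1] ∨
      N = !![1, 0; 1, 1] ∨ N = !![1, -1; 1, 0] ∨ N = !![0, -1; 1, -1] ∨
      ∃ b : K, b ≠ 0 ∧ b ≠ -1 ∧ N = !![1 + b⁻¹, 1; 1, 1]) := by
  simp only [Set.mem_union, Set.mem_insert_iff, Set.mem_singleton_iff, Set.mem_setOf_eq]
  tauto

end Aux

theorem double_coset_representatives (K : Type*) [Field K] :
    (∀ g : GL (Fin 2) K,
      ∃! M : Matrix (Fin 2) (Fin 2) K,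
        (M ∈ ({!![1, 0; 0, 1], !![0, -1; 1, 0], !![1, 1; 0, 1], !![1, 0; 1, 1],
                !![1, -1; 1, 0], !![0, -1; 1, -1]} : Set (Matrix (Fin 2) (Fin 2) K)) ∪
              {N : Matrix (Fin 2) (Fin 2) K |
                ∃ b : K, b ≠ 0 ∧ b ≠ -1 ∧ N = !![1 + b⁻¹, 1; 1, 1]}) ∧
        SameDoubleCoset (g : Matrix (Fin 2) (Fin 2) K) M) ∧
    (∀ b b' : K, b ≠ 0 → b ≠ -1 → b' ≠ 0 → b' ≠ -1 →
      SameDoubleCoset (!![1 + b⁻¹, 1; 1, 1] : Matrix (Fin 2) (Fin 2) K)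
        !![1 + b'⁻¹, 1; 1, 1] → b = b') := by
  constructor
  · intro g
    obtain ⟨M, hmem, hsdc⟩ := exists_rep g
    refine ⟨M, ⟨(mem_iff M).mpr hmem, hsdc⟩, ?_⟩
    rintro M' ⟨hmem', hsdc'⟩
    exact reps_eq ((mem_iff M').mp hmem') hmem (sdc_trans (sdc_symm hsdc') hsdc)
  · intro b b' hb0 hb1 hb0' hb1' hsdc
    obtain ⟨_, _, _, _, cross⟩ := sdc_invariants hsdc
    simp only [Matrix.cons_val', Matrix.cons_val_zero, Matrix.cons_val_one, Matrix.head_cons,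
      Matrix.head_fin_const, Matrix.empty_val', Matrix.cons_val_fin_one, Matrix.of_apply,
      mul_one, one_mul] at cross
    exact inv_injective (by linear_combination cross)
end

section
/- Let p be a prime number and let φ : (0, 2π/log p) → (−2,2) be the map φ(y) = 2·cos((y·log p)/2). Define the density f(y) = (log p)/(4π) · (2 − 2cos(y·log p)) · (1 − p^{−1}) / (1 − p^{−1/2}·φ(y) + p^{−1})² for y ∈ (0, 2π/log p), and the density g(x) = (p−1)/(2π) · √(4−x²) / (p^{1/2} + p^{−1/2} − x)² for x ∈ (−2,2). Then the pushforward under φ of the measure f(y)·dy on (0, 2π/log p) equals the measure g(x)·dx on (−2,2). -/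
open MeasureTheory Real

lemma aux_alg_pushforward_split (Lp Pi q st c : ℝ) (hq0 : 0 < q) (hPi : 0 < Pi)
    (hE : 0 < q + q⁻¹ - 2 * c) (hsq : st ^ 2 = 1 - c ^ 2) :
    Lp * st * ((q * q - 1) / (2 * Pi) * (2 * st) / (q + q⁻¹ - 2 * c) ^ 2) =
      Lp / (4 * Pi) * (2 - 2 * (2 * c ^ 2 - 1)) * (1 - (q * q)⁻¹) /
        ((q + q⁻¹ - 2 * c) * q⁻¹) ^ 2 := by
  have h1 : q ≠ 0 := hq0.ne'
  have h2 : Pi ≠ 0 := hPi.ne'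
  have h3 : q + q⁻¹ - 2 * c ≠ 0 := hE.ne'
  have hq2 : (1:ℝ) - (q*q)⁻¹ = (q*q - 1) / (q*q) := by field_simp
  have h4c : (2:ℝ) - 2*(2*c^2 - 1) = 4 * st^2 := by rw [hsq]; ring
  have hEq : q + q⁻¹ - 2 * c = (q * q - 2 * c * q + 1) / q := by
    field_simp; ring
  have hF : q * q - 2 * c * q + 1 ≠ 0 := by
    intro h0
    rw [hEq, h0, zero_div] at hE
    exact lt_irrefl 0 hE
  rw [hq2, h4c, mul_pow, hEq]
  field_simp

theorem pushforward_local_spectral_measure_split (p : ℕ) (hp : p.Prime) :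
    Measure.map (fun y : ℝ => 2 * Real.cos (y * Real.log p / 2))
      ((volume.restrict (Set.Ioo (0 : ℝ) (2 * Real.pi / Real.log p))).withDensity
        (fun y : ℝ => ENNReal.ofReal
          (Real.log p / (4 * Real.pi) * (2 - 2 * Real.cos (y * Real.log p)) *
            (1 - (p : ℝ)⁻¹) /
            (1 - (p : ℝ) ^ (-(1 : ℝ) / 2) * (2 * Real.cos (y * Real.log p / 2)) +
              (p : ℝ)⁻¹) ^ 2))) =
    (volume.restrict (Set.Ioo (-2 : ℝ) 2)).withDensity
      (fun x : ℝ => ENNReal.ofReal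
        (((p : ℝ) - 1) / (2 * Real.pi) * Real.sqrt (4 - x ^ 2) /
          ((p : ℝ) ^ ((1 : ℝ) / 2) + (p : ℝ) ^ (-(1 : ℝ) / 2) - x) ^ 2)) := by
  have hp1 : (1 : ℝ) < p := by exact_mod_cast hp.one_lt
  have hp0 : (0 : ℝ) < p := lt_trans one_pos hp1
  have hL : 0 < Real.log p := Real.log_pos hp1
  set L : ℝ := Real.log p with hLdef
  set q : ℝ := (p : ℝ) ^ ((1 : ℝ) / 2) with hqdef
  have hq1 : 1 < q := by
    rw [hqdef]
    exact Real.one_lt_rpow_iff_of_pos hp0 |>.mpr (Or.inl ⟨hp1, by norm_num⟩)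
  have hq0 : 0 < q := lt_trans one_pos hq1
  have hqsq : q * q = (p : ℝ) := by
    rw [hqdef, ← Real.rpow_add hp0]; norm_num
  have hqinv : (p : ℝ) ^ (-(1 : ℝ) / 2) = q⁻¹ := by
    rw [hqdef, ← Real.rpow_neg_one ((p : ℝ) ^ ((1 : ℝ) / 2)), ← Real.rpow_mul hp0.le]
    norm_num
  set φ : ℝ → ℝ := fun y => 2 * Real.cos (y * L / 2) with hφdef
  set s : Set ℝ := Set.Ioo (0 : ℝ) (2 * Real.pi / L) with hsdef
  have hφm : Measurable φ := by fun_prop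
  have hsm : MeasurableSet s := measurableSet_Ioo
  -- for y in s, y*L/2 ∈ Ioo 0 π
  have ht : ∀ y ∈ s, y * L / 2 ∈ Set.Ioo (0 : ℝ) π := by
    intro y hy
    obtain ⟨hy0, hy2⟩ := hy
    constructor
    · positivity
    · have := (lt_div_iff₀ hL).mp hy2
      linarith
  -- injectivity
  have hinj : Set.InjOn φ s := by
    intro a ha b hb hab
    have hta := ht a ha
    have htb := ht b hb
    have heq : a * L / 2 = b * L / 2 := by
      apply Real.injOn_cos (Set.mem_Icc_of_Ioo hta) (Set.mem_Icc_of_Ioo htb)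
      have h2 : 2 * Real.cos (a * L / 2) = 2 * Real.cos (b * L / 2) := hab
      linarith
    have : a * L = b * L := by linarith
    exact mul_right_cancel₀ hL.ne' this
  -- image
  have himg : φ '' s = Set.Ioo (-2 : ℝ) 2 := by
    ext x
    constructor
    · rintro ⟨y, hy, rfl⟩
      obtain ⟨ht0, htπ⟩ := ht y hy
      have h1 : Real.cos (y * L / 2) < Real.cos 0 :=
        Real.strictAntiOn_cos ⟨le_refl 0, Real.pi_pos.le⟩ ⟨ht0.le, htπ.le⟩ ht0
      have h2 : Real.cos π < Real.cos (y * L / 2) :=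
        Real.strictAntiOn_cos ⟨ht0.le, htπ.le⟩ ⟨Real.pi_pos.le, le_refl π⟩ htπ
      rw [Real.cos_zero] at h1
      rw [Real.cos_pi] at h2
      exact ⟨by simp only [hφdef]; linarith, by simp only [hφdef]; linarith⟩
    · rintro ⟨hx1, hx2⟩
      have hx1' : -1 < x / 2 := by linarith
      have hx2' : x / 2 < 1 := by linarith
      refine ⟨2 * Real.arccos (x / 2) / L, ⟨?_, ?_⟩, ?_⟩
      · have : 0 < Real.arccos (x / 2) := Real.arccos_pos.mpr hx2'
        positivity
      · rw [div_lt_div_iff_of_pos_right hL]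
        have : Real.arccos (x / 2) < π := by
          rw [Real.arccos_eq_pi_div_two_sub_arcsin]
          have := Real.neg_pi_div_two_lt_arcsin.mpr hx1'
          linarith
        nlinarith
      · have harg : 2 * Real.arccos (x / 2) / L * L / 2 = Real.arccos (x / 2) := by
          field_simp
        simp only [hφdef, harg, Real.cos_arccos hx1'.le hx2'.le]
        ring
  -- derivative
  have hderiv : ∀ y : ℝ, HasDerivAt φ (-(L * Real.sin (y * L / 2))) y := by
    intro y
    have h1 : HasDerivAt (fun y : ℝ => y * L / 2) (L / 2) y := by
      simpa using ((hasDerivAt_id y).mul_const L).div_const 2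
    have h2 := ((Real.hasDerivAt_cos (y * L / 2)).comp y h1).const_mul 2
    rw [show -(L * Real.sin (y * L / 2)) = 2 * (-Real.sin (y * L / 2) * (L / 2)) by ring]
    exact h2
  -- pointwise density identity on s
  have hpt : ∀ y ∈ s,
      ENNReal.ofReal |(-(L * Real.sin (y * L / 2)))| *
        ENNReal.ofReal (((p : ℝ) - 1) / (2 * Real.pi) * Real.sqrt (4 - (φ y) ^ 2) /
          ((p : ℝ) ^ ((1 : ℝ) / 2) + (p : ℝ) ^ (-(1 : ℝ) / 2) - φ y) ^ 2) =
      ENNReal.ofReal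
          (L / (4 * Real.pi) * (2 - 2 * Real.cos (y * L)) *
            (1 - (p : ℝ)⁻¹) /
            (1 - (p : ℝ) ^ (-(1 : ℝ) / 2) * (2 * Real.cos (y * L / 2)) +
              (p : ℝ)⁻¹) ^ 2) := by
    intro y hy
    obtain ⟨ht0, htπ⟩ := ht y hy
    have hsin : 0 < Real.sin (y * L / 2) := Real.sin_pos_of_pos_of_lt_pi ht0 htπ
    set st : ℝ := Real.sin (y * L / 2) with hstdef
    set c : ℝ := Real.cos (y * L / 2) with hcdef
    have hc1 : c < 1 := by
      have h1 : Real.cos (y * L / 2) < Real.cos 0 :=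
        Real.strictAntiOn_cos ⟨le_refl 0, Real.pi_pos.le⟩ ⟨ht0.le, htπ.le⟩ ht0
      rwa [Real.cos_zero] at h1
    have hsq : st ^ 2 = 1 - c ^ 2 := by
      have := Real.sin_sq_add_cos_sq (y * L / 2)
      rw [hstdef, hcdef]; linarith
    have hφy : φ y = 2 * c := by simp [hφdef, hcdef]
    have hcos2 : Real.cos (y * L) = 2 * c ^ 2 - 1 := by
      have hyL : y * L = 2 * (y * L / 2) := by ring
      rw [hyL, Real.cos_two_mul, hcdef]
    -- sqrt simplification
    have hsqrt : Real.sqrt (4 - (2 * c) ^ 2) = 2 * st := by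
      rw [show (4 : ℝ) - (2 * c) ^ 2 = (2 * st) ^ 2 by nlinarith]
      exact Real.sqrt_sq (by positivity)
    have hEeq : q + q⁻¹ - 2 = (q - 1) ^ 2 / q := by
      field_simp; ring
    have hE : 0 < q + q⁻¹ - 2 * c := by
      have h2 : 0 < q + q⁻¹ - 2 := by
        rw [hEeq]
        exact div_pos (pow_pos (sub_pos.mpr hq1) 2) hq0
      linarith
    have hD : 1 - q⁻¹ * (2 * c) + (p : ℝ)⁻¹ = (q + q⁻¹ - 2 * c) * q⁻¹ := by
      rw [← hqsq, mul_inv]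
      field_simp
      ring
    rw [abs_neg, abs_of_nonneg (by positivity : (0 : ℝ) ≤ L * st),
      ← ENNReal.ofReal_mul (by positivity)]
    congr 1
    rw [hφy, hqinv, ← hqdef, hsqrt, hcos2, hD, ← hqsq]
    exact aux_alg_pushforward_split L π q st c hq0 Real.pi_pos hE hsq
  -- main computation
  refine Measure.ext fun A hA => ?_
  rw [Measure.map_apply hφm hA, withDensity_apply _ (hφm hA), withDensity_apply _ hA,
    Measure.restrict_restrict (hφm hA), Measure.restrict_restrict hA]
  have hset : A ∩ Set.Ioo (-2 : ℝ) 2 = φ '' (s ∩ φ ⁻¹' A) := by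
    rw [Set.image_inter_preimage, himg, Set.inter_comm]
  rw [hset,
    lintegral_image_eq_lintegral_abs_det_fderiv_mul volume (hsm.inter (hφm hA))
      (fun x _ => ((hderiv x).hasDerivWithinAt.hasFDerivWithinAt))
      (hinj.mono Set.inter_subset_left) _,
    Set.inter_comm]
  refine setLIntegral_congr_fun (hsm.inter (hφm hA)) ?_
  intro y hy
  simp only [ContinuousLinearMap.det_toSpanSingleton]
  exact (hpt y hy.1).symm
end
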